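/- arXiv:1902.03106 — 5 statements merged into one kernel-verified Lean document; each statement's English description precedes it below -/
import Mathlib

section
/- Let γ > 1 and define χ(π) = γπ/(1+π) and b(π) = π/(2π+1). Then for all π with 0 < π < 1/(γ-1) and π ≤ 1, we have b(π) < χ(π) < 1. -/
/-- first relativistic compressibility condition for the CIG indicatrix. -/
theorem stmt_6 (γ : ℝ) (hγ : 1 < γ) (π : ℝ)
    (h0 : 0 < π) (h1 : π < 1 / (γ - 1)) (h2 : π ≤ 1) :
    π / (2 * π + 1) < γ * π / (1 + π) ∧ γ * π / (1 + π) < 1 := by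
  have hg : 0 < γ - 1 := by linarith
  have h1' : π * (γ - 1) < 1 := by
    rw [lt_div_iff₀ hg] at h1; linarith
  constructor
  · rw [div_lt_div_iff₀ (by linarith) (by linarith)]
    nlinarith [mul_pos h0 h0, mul_pos (sub_pos.mpr hγ) h0]
  · rw [div_lt_one (by linarith)]
    nlinarith
end

section
/- Let γ > 1 and define χ(π) = γπ/(1+π), so that χ'(π) = γ/(1+π)². Then for π > 0, the inequality (1+π)(χ(π) - π)·χ'(π) + 2χ(π)(1 - χ(π)) > 0 holds if and only if π < (γ+1)/(2γ-1). -/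
/-- the second relativistic compressibility condition for the CIG indicatrix
    holds iff π < (γ+1)/(2γ-1). -/
theorem stmt_7 (γ : ℝ) (hγ : 1 < γ) (π : ℝ) (h0 : 0 < π) :
    ((1 + π) * (γ * π / (1 + π) - π) * (γ / (1 + π) ^ 2)
        + 2 * (γ * π / (1 + π)) * (1 - γ * π / (1 + π)) > 0)
      ↔ π < (γ + 1) / (2 * γ - 1) := by
  have hu : (0:ℝ) < 1 + π := by linarith
  have hu' : (1:ℝ) + π ≠ 0 := ne_of_gt hu
  have key : (1 + π) * (γ * π / (1 + π) - π) * (γ / (1 + π) ^ 2)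
        + 2 * (γ * π / (1 + π)) * (1 - γ * π / (1 + π))
      = γ * π * (γ + 1 - (2 * γ - 1) * π) / (1 + π) ^ 2 := by
    field_simp
    ring
  have hsq : (0:ℝ) < (1 + π) ^ 2 := by positivity
  have hgp : (0:ℝ) < γ * π := by positivity
  have h2g : (0:ℝ) < 2 * γ - 1 := by linarith
  rw [key, gt_iff_lt, lt_div_iff₀ hsq, zero_mul, lt_div_iff₀ h2g]
  constructor
  · intro h
    nlinarith
  · intro h
    nlinarith
end

section
/- Let γ ≥ 5/3 and define n(ρ,p) = ρ - p/(γ-1) for ρ > 0, p > 0. Then there is no π ∈ (0,1) such that, setting p = πρ, the Taub inequality n(ρ,p)² ≤ ρ(ρ - 3p) holds. -/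
/-- for γ ≥ 5/3 the Taub inequality n² ≤ ρ(ρ - 3p) fails for every π ∈ (0,1). -/
theorem stmt_9 (γ : ℝ) (hγ : 5 / 3 ≤ γ) (ρ : ℝ) (hρ : 0 < ρ) :
    ¬ ∃ π : ℝ, 0 < π ∧ π < 1 ∧
      (ρ - π * ρ / (γ - 1)) ^ 2 ≤ ρ * (ρ - 3 * (π * ρ)) := by
  rintro ⟨π, hπ0, hπ1, h⟩
  have hg : (0:ℝ) < γ - 1 := by linarith
  have h' : (ρ * (γ - 1) - π * ρ) ^ 2 ≤ ρ * (ρ - 3 * (π * ρ)) * (γ - 1) ^ 2 := by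
    have : ρ - π * ρ / (γ - 1) = (ρ * (γ - 1) - π * ρ) / (γ - 1) := by
      field_simp
    rw [this, div_pow, div_le_iff₀ (by positivity)] at h
    linarith
  have h1 : 0 < ρ ^ 2 * π := by positivity
  have h2 : 0 < π + (γ - 1) * (3 * (γ - 1) - 2) := by nlinarith
  nlinarith [mul_pos h1 h2]
end

section
/- Let α, β : I → ℝ be twice differentiable on an interval I with α(t) ≠ 0 for all t ∈ I. Suppose the four functions P = 3αȦ - 4α̇A, Q = 3βȦ + 3αḂ - 4α̇B - 4β̇A, R = 3βḂ + 3αĊ - 4β̇B - 4α̇C, S = 3βĊ - 4β̇C vanish identically on I, where A = 2αα̈ - α̇² + 3α^(2-γ), B = 2(αβ̈ + βα̈ - α̇β̇ + 3βα^(1-γ)), C = 2ββ̈ - β̇² + 3β²α^(-γ), for some γ > 1 and α > 0. Then α³S - βα²R + β²αQ - β³P = 4α⁶·((β/α)˙)³, and consequently β = c·α on I for some constant c. -/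
/-- the consistency equations P = Q = R = S = 0 for geodesic spherically
    symmetric CIG solutions force β = c·α (FLRW limit). Dots are derivatives w.r.t. t,
    provided here through `HasDerivAt` hypotheses. -/
theorem stmt_18 (γ : ℝ) (hγ : 1 < γ) (I : Set ℝ) (hI : I.OrdConnected)
    (α β α' β' α'' β'' A B C A' B' C' : ℝ → ℝ)
    (hαpos : ∀ t ∈ I, 0 < α t)
    (hdα : ∀ t ∈ I, HasDerivAt α (α' t) t) (hdα' : ∀ t ∈ I, HasDerivAt α' (α'' t) t)
    (hdβ : ∀ t ∈ I, HasDerivAt β (β' t) t) (hdβ' : ∀ t ∈ I, HasDerivAt β' (β'' t) t)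
    (hA : ∀ t ∈ I, A t = 2 * α t * α'' t - (α' t) ^ 2 + 3 * α t ^ (2 - γ))
    (hB : ∀ t ∈ I, B t = 2 * (α t * β'' t + β t * α'' t - α' t * β' t + 3 * β t * α t ^ (1 - γ)))
    (hC : ∀ t ∈ I, C t = 2 * β t * β'' t - (β' t) ^ 2 + 3 * β t ^ 2 * α t ^ (-γ))
    (hdA : ∀ t ∈ I, HasDerivAt A (A' t) t)
    (hdB : ∀ t ∈ I, HasDerivAt B (B' t) t)
    (hdC : ∀ t ∈ I, HasDerivAt C (C' t) t)
    (hP : ∀ t ∈ I, 3 * α t * A' t - 4 * α' t * A t = 0)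
    (hQ : ∀ t ∈ I, 3 * β t * A' t + 3 * α t * B' t - 4 * α' t * B t - 4 * β' t * A t = 0)
    (hR : ∀ t ∈ I, 3 * β t * B' t + 3 * α t * C' t - 4 * β' t * B t - 4 * α' t * C t = 0)
    (hS : ∀ t ∈ I, 3 * β t * C' t - 4 * β' t * C t = 0) :
    (∀ t ∈ I,
      α t ^ 3 * (3 * β t * C' t - 4 * β' t * C t)
        - β t * α t ^ 2 * (3 * β t * B' t + 3 * α t * C' t - 4 * β' t * B t - 4 * α' t * C t)
        + β t ^ 2 * α t * (3 * β t * A' t + 3 * α t * B' t - 4 * α' t * B t - 4 * β' t * A t)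
        - β t ^ 3 * (3 * α t * A' t - 4 * α' t * A t)
      = 4 * α t ^ 6 * ((β' t * α t - β t * α' t) / α t ^ 2) ^ 3) ∧
    ∃ c : ℝ, ∀ t ∈ I, β t = c * α t := by
  -- key pointwise fact: the Wronskian β'α - βα' vanishes on I
  have hu : ∀ t ∈ I, β' t * α t - β t * α' t = 0 := by
    intro t ht
    have hapos := hαpos t ht
    have e2 : α t ^ (2 - γ) = α t ^ 2 * α t ^ (-γ) := by
      rw [show (2 - γ) = (2 : ℝ) + (-γ) by ring, Real.rpow_add hapos,
        show ((2 : ℝ) : ℝ) = ((2 : ℕ) : ℝ) by norm_num, Real.rpow_natCast]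
    have e1 : α t ^ (1 - γ) = α t * α t ^ (-γ) := by
      rw [show (1 - γ) = (1 : ℝ) + (-γ) by ring, Real.rpow_add hapos, Real.rpow_one]
    have hA' := hA t ht; have hB' := hB t ht; have hC' := hC t ht
    rw [e2] at hA'; rw [e1] at hB'
    have hP' := hP t ht; have hQ' := hQ t ht; have hR' := hR t ht; have hS' := hS t ht
    have hcube : (β' t * α t - β t * α' t) ^ 3 = 0 := by
      have h4 : 4 * (β' t * α t - β t * α' t) ^ 3 = 0 := by
        linear_combination (α t ^ 3) * hS' - (β t * α t ^ 2) * hR' + (β t ^ 2 * α t) * hQ'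
          - (β t ^ 3) * hP'
          + 4 * (β' t * α t - β t * α' t) * (β t ^ 2) * hA'
          - 4 * (β' t * α t - β t * α' t) * (α t * β t) * hB'
          + 4 * (β' t * α t - β t * α' t) * (α t ^ 2) * hC'
      linarith
    exact pow_eq_zero_iff (by norm_num) |>.mp hcube
  constructor
  · intro t ht
    rw [hS t ht, hR t ht, hQ t ht, hP t ht, hu t ht]
    simp
  · -- β/α has zero derivative on I, and I is convex, so β/α is constant
    have hderiv : ∀ t ∈ I, HasDerivWithinAt (fun x => β x / α x) 0 I t := by
      intro t ht
      have h := (hdβ t ht).div (hdα t ht) (ne_of_gt (hαpos t ht))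
      rw [hu t ht] at h
      have h2 := h.hasDerivWithinAt (s := I)
      simp at h2
      exact h2
    have hconv : Convex ℝ I := hI.convex
    rcases Set.eq_empty_or_nonempty I with hIe | ⟨t₀, ht₀⟩
    · exact ⟨0, by simp [hIe]⟩
    · refine ⟨β t₀ / α t₀, fun t ht => ?_⟩
      have := hconv.norm_image_sub_le_of_norm_hasDerivWithin_le
        (f' := fun _ => (0 : ℝ)) (C := 0) hderiv (fun x _ => by simp) ht₀ ht
      simp only [zero_mul, norm_le_zero_iff, sub_eq_zero] at this
      rw [div_eq_iff (ne_of_gt (hαpos t ht))] at this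
      exact this
end

section
/- Let γ > 1. The set of π ∈ (0,1] for which all of the following hold: (i) π < γ - 1, (ii) π/(2π+1) < γπ/(1+π) < 1, and (iii) (1+π)·(γπ/(1+π) - π)·(γ/(1+π)²) + 2·(γπ/(1+π))·(1 - γπ/(1+π)) > 0, is exactly the interval (0, min(γ-1, 1/(γ-1), 1)) ∩ (0,1]. -/
/-- the set of π ∈ (0,1] satisfying the positivity and both relativistic
    compressibility conditions for a CIG equals (0, min(γ-1, 1/(γ-1), 1)) ∩ (0,1]. -/
theorem stmt_19 (γ : ℝ) (hγ : 1 < γ) :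
    {π : ℝ | π ∈ Set.Ioc (0 : ℝ) 1 ∧ π < γ - 1 ∧
        (π / (2 * π + 1) < γ * π / (1 + π) ∧ γ * π / (1 + π) < 1) ∧
        (1 + π) * (γ * π / (1 + π) - π) * (γ / (1 + π) ^ 2)
          + 2 * (γ * π / (1 + π)) * (1 - γ * π / (1 + π)) > 0}
      = Set.Ioo 0 (min (γ - 1) (min (1 / (γ - 1)) 1)) ∩ Set.Ioc (0 : ℝ) 1 := by
  ext π
  simp only [Set.mem_setOf_eq, Set.mem_inter_iff, Set.mem_Ioo, Set.mem_Ioc, lt_min_iff]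
  have hγ1 : (0:ℝ) < γ - 1 := by linarith
  constructor
  · rintro ⟨⟨h0, h1⟩, h2, ⟨h3, h4⟩, h5⟩
    have hp : (0:ℝ) < 1 + π := by linarith
    rw [div_lt_one hp] at h4
    refine ⟨⟨h0, h2, ?_, by nlinarith [mul_pos h0 (sub_pos.mpr h2)]⟩, h0, h1⟩
    rw [lt_div_iff₀ hγ1]
    nlinarith
  · rintro ⟨⟨h0, h2, h3, _⟩, _, h1⟩
    have hp : (0:ℝ) < 1 + π := by linarith
    have hp2 : (0:ℝ) < 2 * π + 1 := by linarith
    rw [lt_div_iff₀ hγ1] at h3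
    refine ⟨⟨h0, h1⟩, h2, ⟨?_, ?_⟩, ?_⟩
    · rw [div_lt_div_iff₀ hp2 hp]
      nlinarith [mul_pos h0 hγ1, mul_pos (mul_pos h0 h0) hγ1, mul_pos h0 h0]
    · rw [div_lt_one hp]
      nlinarith
    · have key : (1 + π) * (γ * π / (1 + π) - π) * (γ / (1 + π) ^ 2)
          + 2 * (γ * π / (1 + π)) * (1 - γ * π / (1 + π))
          = γ * π * (γ + 1 + π - 2 * γ * π) / (1 + π) ^ 2 := by
        field_simp
        ring
      rw [key]
      have hnum : 0 < γ + 1 + π - 2 * γ * π := by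
        nlinarith [mul_pos (sub_pos.mpr h2) (sub_pos.mpr h3), mul_pos h0 hγ1]
      positivity
end
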